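/- arXiv:2112.04072 — 2 statements merged into one kernel-verified Lean document; each statement's English description precedes it below -/
import Mathlib

section
/- Let H be a group, let A and B be finite subgroups of H, and let σ : A → B be an isomorphism. Suppose A and B are conjugate in H, i.e. there exists h ∈ H with B = h A h⁻¹. Then the HNN extension G = ⟨H, t | t a t⁻¹ = σ(a) for all a ∈ A⟩ is not co-Hopfian: there exists an injective group endomorphism of G that is not surjective. -/
open FirstOrder Language

/-- Function symbols of the first-order language of groups:
a binary multiplication, a unary inverse and a constant for the identity. -/
inductive GroupFunc : ℕ → Type
  | mul : GroupFunc 2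
  | inv : GroupFunc 1
  | one : GroupFunc 0

/-- The first-order language of groups. -/
def groupLang : FirstOrder.Language :=
  { Functions := GroupFunc
    Relations := fun _ => Empty }

/-- Every group is a structure for the language of groups in the natural way. -/
instance groupLangStructure (G : Type*) [Group G] : groupLang.Structure G where
  funMap {n} f v :=
    match f with
    | .mul => v 0 * v 1
    | .inv => (v 0)⁻¹
    | .one => 1
  RelMap {n} r _ := r.elim

/-- Existential formulas: iterated existential quantifications of a
quantifier-free formula. -/
inductive IsExistentialQF {α : Type*} : ∀ {n : ℕ}, groupLang.BoundedFormula α n → Prop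
  | of_isQF {n : ℕ} {φ : groupLang.BoundedFormula α n} (h : φ.IsQF) : IsExistentialQF φ
  | ex {n : ℕ} {φ : groupLang.BoundedFormula α (n + 1)} (h : IsExistentialQF φ) :
      IsExistentialQF φ.ex

/-- Universal formulas: iterated universal quantifications of a
quantifier-free formula. -/
inductive IsUniversalQF {α : Type*} : ∀ {n : ℕ}, groupLang.BoundedFormula α n → Prop
  | of_isQF {n : ℕ} {φ : groupLang.BoundedFormula α n} (h : φ.IsQF) : IsUniversalQF φ
  | all {n : ℕ} {φ : groupLang.BoundedFormula α (n + 1)} (h : IsUniversalQF φ) :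
      IsUniversalQF φ.all

/-- ∀∃-formulas: iterated universal quantifications of an existential formula. -/
inductive IsAE {α : Type*} : ∀ {n : ℕ}, groupLang.BoundedFormula α n → Prop
  | of_existential {n : ℕ} {φ : groupLang.BoundedFormula α n} (h : IsExistentialQF φ) : IsAE φ
  | all {n : ℕ} {φ : groupLang.BoundedFormula α (n + 1)} (h : IsAE φ) : IsAE φ.all

/-- A group is virtually free if it has a free subgroup of finite index. -/
def VirtuallyFree (G : Type*) [Group G] : Prop :=
  ∃ H : Subgroup G, H.FiniteIndex ∧ Nonempty (IsFreeGroup H)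

/-- A group is co-Hopfian if every injective endomorphism is surjective. -/
def CoHopfian (G : Type*) [Group G] : Prop :=
  ∀ φ : G →* G, Function.Injective φ → Function.Surjective φ

/-- Two homomorphisms `φ, φ' : G → G'` are equivalent if they coincide up to
conjugation on every finite subgroup of `G`. -/
def HomEquiv {G G' : Type*} [Group G] [Group G'] (φ φ' : G →* G') : Prop :=
  ∀ H : Subgroup G, (H : Set G).Finite →
    ∃ g' : G', ∀ h ∈ H, φ' h = g' * φ h * g'⁻¹

/-- Two groups are ∀∃-equivalent if they satisfy the same ∀∃-sentences. -/
def AEEquivalent (G : Type*) (G' : Type*) [Group G] [Group G'] : Prop :=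
  ∀ φ : groupLang.Sentence, IsAE φ → (G ⊨ φ ↔ G' ⊨ φ)

/-- Two groups are ∃-equivalent if they satisfy the same existential sentences. -/
def ExistentiallyEquivalent (G : Type*) (G' : Type*) [Group G] [Group G'] : Prop :=
  ∀ φ : groupLang.Sentence, IsExistentialQF φ → (G ⊨ φ ↔ G' ⊨ φ)

/-- An endomorphism is rigid-testing: `G` is rigid if every endomorphism
equivalent to the identity is an automorphism. -/
def Rigid (G : Type*) [Group G] : Prop :=
  ∀ φ : G →* G, HomEquiv φ (MonoidHom.id G) → Function.Bijective φ

/-- `Out G` is finite, expressed as: the inner automorphisms form a finite index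
subgroup of `Aut G`. -/
def OutFinite (G : Type*) [Group G] : Prop :=
  (MulAut.conj : G →* MulAut G).range.FiniteIndex

/-- Iterated composition of an endomorphism. -/
def homPow {G : Type*} [Group G] (φ : G →* G) : ℕ → (G →* G)
  | 0 => MonoidHom.id G
  | n + 1 => φ.comp (homPow φ n)

/-- An endomorphism `φ` of `G` is class-permuting if some positive power of `φ`
is equivalent to the identity of `G`. -/
def ClassPermuting {G : Type*} [Group G] (φ : G →* G) : Prop :=
  ∃ n : ℕ, 1 ≤ n ∧ HomEquiv (homPow φ n) (MonoidHom.id G)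

/-- A maximal finite subgroup: a finite subgroup maximal with respect to
inclusion among finite subgroups. -/
def MaximalFiniteSubgroup {G : Type*} [Group G] (A : Subgroup G) : Prop :=
  (A : Set G).Finite ∧ ∀ B : Subgroup G, (B : Set G).Finite → A ≤ B → A = B

/-- Two subgroups are conjugate. -/
def SubgroupConj {G : Type*} [Group G] (A B : Subgroup G) : Prop :=
  ∃ g : G, B = A.map (MulAut.conj g).toMonoidHom

/-- A group is strongly co-Hopfian if there is a finite subset `F` of
`G \ {1}` such that every endomorphism whose kernel misses `F` is an
automorphism. -/
def StronglyCoHopfian (G : Type*) [Group G] : Prop :=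
  ∃ F : Finset G, (1 : G) ∉ F ∧
    ∀ φ : G →* G, (∀ f ∈ F, φ f ≠ 1) → Function.Bijective φ

/-- A group is finitely presented. -/
def GroupFinitelyPresented (G : Type*) [Group G] : Prop :=
  ∃ (n : ℕ) (rels : Finset (FreeGroup (Fin n))),
    Nonempty (PresentedGroup (rels : Set (FreeGroup (Fin n))) ≃* G)

section HNNAux

private lemma hnn_mul_pow_shift {M : Type*} [Monoid M] (x y : M) :
    ∀ n : ℕ, x * (y * x) ^ n = (x * y) ^ n * x
  | 0 => by simp
  | n + 1 => by
    rw [pow_succ, ← mul_assoc, hnn_mul_pow_shift x y n, pow_succ]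
    simp [mul_assoc]

private def hnnBlockify {G : Type*} [Group G] (m : ℕ) (h : G) (p : ℤˣ × G) : List (ℤˣ × G) :=
  List.replicate m (p.1, if p.1 = 1 then h⁻¹ else h) ++ [p]

private lemma hnnBlockify_ne_nil {G : Type*} [Group G] (m : ℕ) (h : G) (p : ℤˣ × G) :
    hnnBlockify m h p ≠ [] := by simp [hnnBlockify]

private lemma hnnBlockify_fst {G : Type*} [Group G] {m : ℕ} {h : G} {p x : ℤˣ × G}
    (hx : x ∈ hnnBlockify m h p) : x.1 = p.1 := by
  simp only [hnnBlockify, List.mem_append, List.mem_replicate, List.mem_singleton] at hx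
  rcases hx with ⟨-, rfl⟩ | rfl <;> rfl

private lemma hnn_chain'_of_fst_const {G : Type*} [Group G] (A B : Subgroup G) (v : ℤˣ) :
    ∀ (l : List (ℤˣ × G)), (∀ x ∈ l, x.1 = v) →
      l.Chain' (fun a b => a.2 ∈ HNNExtension.toSubgroup A B a.1 → a.1 = b.1)
  | [], _ => List.isChain_nil
  | [a], _ => List.isChain_singleton a
  | a :: b :: l, hl => List.IsChain.cons_cons
      (fun _ => by rw [hl a (by simp), hl b (by simp)])
      (hnn_chain'_of_fst_const A B v (b :: l)
        (fun x hx => hl x (List.mem_cons_of_mem _ hx)))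

private lemma hnn_chain'_flatMap {G : Type*} [Group G] (A B : Subgroup G) (m : ℕ) (h : G) :
    ∀ (l : List (ℤˣ × G)),
      l.Chain' (fun a b => a.2 ∈ HNNExtension.toSubgroup A B a.1 → a.1 = b.1) →
      (l.flatMap (hnnBlockify m h)).Chain'
        (fun a b => a.2 ∈ HNNExtension.toSubgroup A B a.1 → a.1 = b.1)
  | [], _ => by exact List.isChain_nil
  | p :: l, hl => by
    rw [List.flatMap_cons, List.Chain', List.isChain_append]
    refine ⟨hnn_chain'_of_fst_const A B p.1 _ (fun x hx => hnnBlockify_fst hx),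
      hnn_chain'_flatMap A B m h l hl.tail, ?_⟩
    intro x hx y hy
    have hx' : x = p := by
      rw [hnnBlockify, List.getLast?_concat] at hx
      exact (Option.mem_some_iff.1 hx).symm
    subst hx'
    intro hmem
    cases l with
    | nil => simp at hy
    | cons q l' =>
      obtain ⟨a, s, hs⟩ := List.exists_cons_of_ne_nil (hnnBlockify_ne_nil m h q)
      rw [List.flatMap_cons, hs, List.cons_append, List.head?_cons] at hy
      have hy' : y = a := (Option.mem_some_iff.1 hy).symm
      have ha : a.1 = q.1 := hnnBlockify_fst (hs ▸ (List.mem_cons_self (a := a) (l := s)))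
      rw [hy', ha]
      exact (List.isChain_cons_cons.1 hl).1 hmem

end HNNAux

/-- An HNN extension over an isomorphism between two conjugate finite subgroups
is not co-Hopfian. -/
theorem hnnExtension_conjugate_finite_subgroups_not_coHopfian
    (H : Type*) [Group H] (A B : Subgroup H)
    (hA : (A : Set H).Finite) (hB : (B : Set H).Finite)
    (σ : A ≃* B) (h : H) (hconj : B = A.map (MulAut.conj h).toMonoidHom) :
    ∃ ψ : HNNExtension H A B σ →* HNNExtension H A B σ,
      Function.Injective ψ ∧ ¬ Function.Surjective ψ := by
  classical
  haveI hfinA : Finite (↥A) := hA.to_subtype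
  haveI hfinAut : Finite (MulAut ↥A) :=
    Finite.of_injective (fun (e : MulAut ↥A) => (e : ↥A → ↥A)) DFunLike.coe_injective
  -- membership lemmas
  have hmemA : ∀ a : A, h⁻¹ * (σ a : H) * h ∈ A := by
    intro a
    have hb : ((σ a : B) : H) ∈ A.map (MulAut.conj h).toMonoidHom := by
      rw [← hconj]; exact (σ a).2
    obtain ⟨x, hx, hxe⟩ := hb
    have hxe' : h * ↑x * h⁻¹ = (σ a : H) := hxe
    have hxx : h⁻¹ * (σ a : H) * h = ↑x := by rw [← hxe']; group
    rw [hxx]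
    exact hx
  have hmemB : ∀ a : A, h * (a : H) * h⁻¹ ∈ B := by
    intro a
    rw [hconj]
    exact ⟨a, a.2, rfl⟩
  -- the automorphism τ of A : a ↦ h⁻¹ (σ a) h
  let τ : MulAut ↥A :=
    { toFun := fun a => ⟨h⁻¹ * σ a * h, hmemA a⟩
      invFun := fun a => σ.symm ⟨h * a * h⁻¹, hmemB a⟩
      left_inv := by
        intro a
        have hkey : (⟨h * ↑(⟨h⁻¹ * σ a * h, hmemA a⟩ : A) * h⁻¹,
            hmemB ⟨h⁻¹ * σ a * h, hmemA a⟩⟩ : B) = σ a := by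
          ext
          show h * (h⁻¹ * (σ a : H) * h) * h⁻¹ = (σ a : H)
          group
        show σ.symm _ = a
        rw [hkey, MulEquiv.symm_apply_apply]
      right_inv := by
        intro a
        ext
        show h⁻¹ * ↑(σ (σ.symm ⟨h * a * h⁻¹, hmemB a⟩)) * h = (a : H)
        rw [MulEquiv.apply_symm_apply]
        show h⁻¹ * (h * (a : H) * h⁻¹) * h = (a : H)
        group
      map_mul' := by
        intro a b
        ext
        show h⁻¹ * ↑(σ (a * b)) * h = (h⁻¹ * ↑(σ a) * h) * (h⁻¹ * ↑(σ b) * h)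
        rw [map_mul]
        push_cast
        group }
  have hτcoe : ∀ a : A, ((τ a : A) : H) = h⁻¹ * (σ a : H) * h := fun a => rfl
  set m := Nat.card (MulAut ↥A) with hm
  have hm1 : 1 ≤ m := Nat.card_pos
  have hτm : τ ^ m = 1 := pow_card_eq_one'
  -- basic elements
  let of' : H →* HNNExtension H A B σ := HNNExtension.of
  let tt : HNNExtension H A B σ := HNNExtension.t
  let u : HNNExtension H A B σ := of' h⁻¹ * tt
  have ht_mul_of : ∀ a : A, tt * of' (a : H) = of' ((σ a : B) : H) * tt :=
    fun a => HNNExtension.t_mul_of a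
  have hu1 : ∀ a : A, u * of' (a : H) = of' ((τ a : A) : H) * u := by
    intro a
    show of' h⁻¹ * tt * of' (a : H) = of' ((τ a : A) : H) * (of' h⁻¹ * tt)
    rw [hτcoe, mul_assoc, ht_mul_of, ← mul_assoc, ← map_mul, ← mul_assoc, ← map_mul,
      show h⁻¹ * (σ a : H) * h * h⁻¹ = h⁻¹ * (σ a : H) by group]
  have hupow : ∀ (k : ℕ) (a : A), u ^ k * of' (a : H) = of' (((τ ^ k) a : A) : H) * u ^ k := by
    intro k
    induction k with
    | zero => intro a; simp
    | succ n ih =>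
      intro a
      rw [pow_succ, mul_assoc, hu1 a, ← mul_assoc, ih (τ a), mul_assoc, ← pow_succ]
      have hp : ((τ ^ (n + 1)) a : A) = (τ ^ n) (τ a) := by rw [pow_succ]; rfl
      rw [hp]
  have hum : ∀ a : A, u ^ m * of' (a : H) = of' (a : H) * u ^ m := by
    intro a
    have hh := hupow m a
    rwa [hτm, MulAut.one_apply] at hh
  let c : HNNExtension H A B σ := tt * u ^ m
  have hc : ∀ a : A, c * of' (a : H) = of' ((σ a : B) : H) * c := by
    intro a
    show tt * u ^ m * of' (a : H) = of' ((σ a : B) : H) * (tt * u ^ m)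
    rw [mul_assoc, hum a, ← mul_assoc, ht_mul_of, mul_assoc]
  let ψ : HNNExtension H A B σ →* HNNExtension H A B σ := HNNExtension.lift of' c hc
  have hψof : ∀ g : H, ψ (of' g) = of' g := fun g => HNNExtension.lift_of of' c hc g
  have hψt : ψ tt = c := HNNExtension.lift_t of' c hc
  refine ⟨ψ, ?_, ?_⟩
  · -- injectivity
    rw [injective_iff_map_eq_one]
    intro g hg
    obtain ⟨d⟩ := HNNExtension.NormalWord.TransversalPair.nonempty H A B
    set w : HNNExtension.NormalWord d := HNNExtension.NormalWord.equiv σ d g with hwdef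
    have hw : w.prod σ = g := (HNNExtension.NormalWord.equiv σ d).symm_apply_apply g
    have hblock : ∀ p : ℤˣ × H,
        (List.map (fun x : ℤˣ × H => tt ^ (x.1 : ℤ) * of' x.2) (hnnBlockify m h p)).prod =
          ψ (tt ^ (p.1 : ℤ) * of' p.2) := by
      rintro ⟨v, g'⟩
      rw [map_mul, map_zpow, hψt, hψof]
      rcases Int.units_eq_one_or v with rfl | rfl
      · simp only [hnnBlockify, if_true]
        simp only [List.map_append, List.prod_append, List.map_replicate, List.prod_replicate,
          List.map_cons, List.map_nil, List.prod_cons, List.prod_nil, mul_one,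
          Units.val_one, zpow_one]
        rw [← mul_assoc ((tt * of' h⁻¹) ^ m) tt (of' g'), ← hnn_mul_pow_shift tt (of' h⁻¹) m]
      · simp only [hnnBlockify]
        rw [if_neg (by decide)]
        simp only [List.map_append, List.prod_append, List.map_replicate, List.prod_replicate,
          List.map_cons, List.map_nil, List.prod_cons, List.prod_nil, mul_one,
          Units.val_neg, Units.val_one, zpow_neg, zpow_one]
        have hcinv : c⁻¹ = (tt⁻¹ * of' h) ^ m * tt⁻¹ := by
          show (tt * (of' h⁻¹ * tt) ^ m)⁻¹ = (tt⁻¹ * of' h) ^ m * tt⁻¹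
          rw [mul_inv_rev, ← inv_pow, mul_inv_rev, ← map_inv, inv_inv]
        rw [hcinv, mul_assoc]
    have hlist : ∀ l : List (ℤˣ × H),
        (List.map (fun x : ℤˣ × H => tt ^ (x.1 : ℤ) * of' x.2)
            (l.flatMap (hnnBlockify m h))).prod =
          ψ (List.map (fun x : ℤˣ × H => tt ^ (x.1 : ℤ) * of' x.2) l).prod := by
      intro l
      induction l with
      | nil => simp
      | cons p l ih =>
        rw [List.flatMap_cons, List.map_append, List.prod_append, hblock, List.map_cons,
          List.prod_cons, ih]
        exact (map_mul ψ _ _).symm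
    let W : HNNExtension.NormalWord.ReducedWord H A B :=
      ⟨w.head, w.toList.flatMap (hnnBlockify m h), hnn_chain'_flatMap A B m h w.toList w.chain⟩
    have hWprod : W.prod σ = ψ g := by
      rw [← hw]
      show of' w.head * (List.map (fun x : ℤˣ × H => tt ^ (x.1 : ℤ) * of' x.2)
          (w.toList.flatMap (hnnBlockify m h))).prod = ψ (w.prod σ)
      rw [show (w.prod σ : HNNExtension H A B σ)
          = of' w.head * (List.map (fun x : ℤˣ × H => tt ^ (x.1 : ℤ) * of' x.2) w.toList).prod
          from rfl]
      rw [map_mul, hψof]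
      congr 1
      exact hlist w.toList
    have hmem : W.prod σ ∈ (HNNExtension.of.range : Subgroup (HNNExtension H A B σ)) := by
      rw [hWprod, hg]
      exact one_mem _
    have hnil : w.toList.flatMap (hnnBlockify m h) = [] :=
      HNNExtension.ReducedWord.toList_eq_nil_of_mem_of_range σ W hmem
    have hwnil : w.toList = [] := by
      have hall := List.flatMap_eq_nil_iff.1 hnil
      cases hwl : w.toList with
      | nil => rfl
      | cons p l =>
        exact absurd (hall p (by rw [hwl]; exact List.mem_cons_self))
          (hnnBlockify_ne_nil m h p)
    have hghead : g = of' w.head := by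
      rw [← hw]
      show of' w.head * (List.map (fun x : ℤˣ × H => tt ^ (x.1 : ℤ) * of' x.2)
          w.toList).prod = of' w.head
      rw [hwnil]
      simp
    have h2 : of' w.head = 1 := by rw [← hψof w.head, ← hghead, hg]
    have hinj := HNNExtension.of_injective (G := H) (A := A) (B := B) (φ := σ)
    have hhead1 : w.head = 1 := hinj (by
      show of' w.head = of' 1
      rw [h2, map_one])
    rw [hghead, hhead1, map_one]
  · -- non-surjectivity
    intro hs
    obtain ⟨x, hx⟩ := hs tt
    let χ : HNNExtension H A B σ →* Multiplicative ℤ :=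
      HNNExtension.lift 1 (Multiplicative.ofAdd 1) (by intro a; simp)
    have hχof : ∀ g : H, χ (of' g) = 1 := fun g => HNNExtension.lift_of _ _ _ g
    have hχt : χ tt = Multiplicative.ofAdd 1 := HNNExtension.lift_t _ _ _
    have hχu : χ u = Multiplicative.ofAdd 1 := by
      show χ (of' h⁻¹ * tt) = _
      rw [map_mul, hχof, hχt, one_mul]
    have hcomp : ∀ y, χ (ψ y) = (χ y) ^ (m + 1) := by
      have hext : χ.comp ψ = (powMonoidHom (m + 1)).comp χ := by
        apply HNNExtension.hom_ext
        · ext g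
          simp only [MonoidHom.comp_apply, powMonoidHom_apply]
          rw [show (HNNExtension.of : H →* HNNExtension H A B σ) g = of' g from rfl,
            hψof, hχof, one_pow]
        · simp only [MonoidHom.comp_apply, powMonoidHom_apply]
          rw [show (HNNExtension.t : HNNExtension H A B σ) = tt from rfl, hψt]
          show χ (tt * u ^ m) = (χ tt) ^ (m + 1)
          rw [map_mul, map_pow, hχt, hχu, pow_succ']
      intro y
      have hcy := DFunLike.congr_fun hext y
      simpa using hcy
    have h1 : Multiplicative.ofAdd (1 : ℤ) = (χ x) ^ (m + 1) := by
      rw [← hχt, ← hx, hcomp]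
    have h2 : (1 : ℤ) = ((m : ℤ) + 1) * Multiplicative.toAdd (χ x) := by
      have hta := congrArg Multiplicative.toAdd h1
      simpa [toAdd_pow, nsmul_eq_mul] using hta
    have hdvd : ((m : ℤ) + 1) ∣ 1 := Dvd.intro _ h2.symm
    have hle := Int.le_of_dvd one_pos hdvd
    omega
end

section
/- Let G be a finitely presented group. If G is strongly co-Hopfian, then G is prime (for every group G' elementarily equivalent to G there exists an elementary embedding of G into G') and G is ∃-homogeneous (any two n-tuples of elements of G having the same existential type are mapped one to the other by some automorphism of G). -/
open FirstOrder Language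

namespace SCH

open FirstOrder Language BoundedFormula

variable {α β : Type*} {n m : ℕ}

/-- Multiplication term. -/
def mulT (s t : groupLang.Term β) : groupLang.Term β := Term.func GroupFunc.mul ![s, t]

/-- Inverse term. -/
def invT (s : groupLang.Term β) : groupLang.Term β := Term.func GroupFunc.inv ![s]

/-- Identity term. -/
def oneT : groupLang.Term β := Term.func GroupFunc.one ![]

variable {H : Type*} [Group H]

@[simp] lemma realize_mulT (v : β → H) (s t : groupLang.Term β) :
    (mulT s t).realize v = s.realize v * t.realize v := rfl

@[simp] lemma realize_invT (v : β → H) (s : groupLang.Term β) :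
    (invT s).realize v = (s.realize v)⁻¹ := rfl

@[simp] lemma realize_oneT (v : β → H) : (oneT : groupLang.Term β).realize v = 1 := rfl

/-- The term associated to a word. -/
def listT (f : α → groupLang.Term β) : List (α × Bool) → groupLang.Term β
  | [] => oneT
  | x :: l => mulT (cond x.2 (f x.1) (invT (f x.1))) (listT f l)

lemma realize_listT (f : α → groupLang.Term β) (v : β → H) :
    ∀ l : List (α × Bool),
      (listT f l).realize v
        = (l.map fun x => cond x.2 ((f x.1).realize v) ((f x.1).realize v)⁻¹).prod
  | [] => by simp [listT]
  | x :: l => by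
    cases hx : x.2 <;>
      simp [listT, realize_listT f v l, hx]

/-- The term associated to a free group element. -/
def wordT [DecidableEq α] (f : α → groupLang.Term β) (w : FreeGroup α) : groupLang.Term β :=
  listT f w.toWord

lemma realize_wordT [DecidableEq α] (f : α → groupLang.Term β) (v : β → H) (w : FreeGroup α) :
    (wordT f w).realize v = FreeGroup.lift (fun i => (f i).realize v) w := by
  rw [wordT, realize_listT]
  conv_rhs => rw [← FreeGroup.mk_toWord (x := w)]
  rw [FreeGroup.lift_mk]

lemma isQF_foldr_inf :
    ∀ l : List (groupLang.BoundedFormula β n), (∀ φ ∈ l, φ.IsQF) → (l.foldr (· ⊓ ·) ⊤).IsQF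
  | [], _ => IsQF.top
  | φ :: l, h =>
    (h φ List.mem_cons_self).inf
      (isQF_foldr_inf l fun ψ hψ => h ψ (List.mem_cons_of_mem _ hψ))

/-- Conjunction over a finset. -/
noncomputable def fInf {γ : Type*} (s : Finset γ) (f : γ → groupLang.BoundedFormula β n) :
    groupLang.BoundedFormula β n :=
  (s.toList.map f).foldr (· ⊓ ·) ⊤

@[simp] lemma realize_fInf {γ : Type*} (s : Finset γ) (f : γ → groupLang.BoundedFormula β n)
    (v : β → H) (xs : Fin n → H) :
    (fInf s f).Realize v xs ↔ ∀ b ∈ s, (f b).Realize v xs := by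
  simp only [fInf, realize_foldr_inf, List.mem_map, Finset.mem_toList, forall_exists_index,
    and_imp, forall_apply_eq_imp_iff₂]

lemma isQF_iInf {γ : Type*} (s : Finset γ) (f : γ → groupLang.BoundedFormula β n)
    (h : ∀ b, (f b).IsQF) : (fInf s f).IsQF := by
  refine isQF_foldr_inf _ ?_
  intro φ hφ
  rcases List.mem_map.1 hφ with ⟨b, _, rfl⟩
  exact h b

lemma isExistentialQF_exs {k : ℕ} :
    ∀ {φ : groupLang.BoundedFormula β k}, IsExistentialQF φ → IsExistentialQF φ.exs := by
  induction k with
  | zero => exact fun h => h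
  | succ k ih => exact fun h => ih (IsExistentialQF.ex h)

/-- A term for the `i`-th bound variable. -/
def bv (i : Fin n) : groupLang.Term (β ⊕ Fin n) := Term.var (Sum.inr i)

/-- The quantifier-free formula expressing that the bound variables satisfy the
relations `rels` and that the words in `ws` are nontrivial. -/
noncomputable def Θ (β : Type*) {n : ℕ} (rels ws : Finset (FreeGroup (Fin n))) :
    groupLang.BoundedFormula β n :=
  (fInf rels fun r => Term.bdEqual (wordT bv r) oneT) ⊓
    (fInf ws fun w => (Term.bdEqual (wordT bv w) oneT).not)

lemma isQF_Θ (rels ws : Finset (FreeGroup (Fin n))) : (Θ β rels ws).IsQF :=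
  (isQF_iInf _ _ fun _ => (IsAtomic.equal _ _).isQF).inf
    (isQF_iInf _ _ fun _ => (IsAtomic.equal _ _).isQF.not)

lemma realize_Θ (rels ws : Finset (FreeGroup (Fin n))) (v : β → H) (xs : Fin n → H) :
    (Θ β rels ws).Realize v xs ↔
      ((∀ r ∈ rels, FreeGroup.lift xs r = 1) ∧ ∀ w ∈ ws, FreeGroup.lift xs w ≠ 1) := by
  have hb : ∀ w : FreeGroup (Fin n),
      (wordT (bv (β := β)) w).realize (Sum.elim v xs) = FreeGroup.lift xs w := by
    intro w
    rw [realize_wordT]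
    rfl
  simp only [Θ, realize_inf, realize_fInf, realize_not, realize_bdEqual, hb, realize_oneT]

lemma realize_Θ_exs (rels ws : Finset (FreeGroup (Fin n))) :
    H ⊨ (Θ Empty rels ws).exs ↔
      ∃ xs : Fin n → H,
        (∀ r ∈ rels, FreeGroup.lift xs r = 1) ∧ ∀ w ∈ ws, FreeGroup.lift xs w ≠ 1 := by
  rw [Sentence.Realize, realize_exs]
  exact exists_congr fun xs => realize_Θ rels ws _ xs

lemma realize_relabel_inr (φ' : groupLang.Formula (Fin n)) (v : Empty → H)
    (xs : Fin (n + 0) → H) :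
    (BoundedFormula.relabel (Sum.inr : Fin n → Empty ⊕ Fin n) φ').Realize v xs ↔
      φ'.Realize (xs ∘ Fin.castAdd 0) := by
  rw [BoundedFormula.realize_relabel]
  have h2 : xs ∘ Fin.natAdd n = (default : Fin 0 → H) := Subsingleton.elim _ _
  rw [h2]
  rfl

@[simp] lemma realize_wordT_bv (v : β → H) (xs : Fin n → H) (w : FreeGroup (Fin n)) :
    (wordT (bv (β := β)) w).realize (Sum.elim v xs) = FreeGroup.lift xs w := by
  rw [realize_wordT]
  rfl

lemma realize_subst_word {k : ℕ} (φ : groupLang.Formula (Fin k))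
    (w : Fin k → FreeGroup (Fin n)) (y : Fin n → H) :
    FirstOrder.Language.Formula.Realize
        (BoundedFormula.subst φ (fun i => wordT Term.var (w i)) : groupLang.Formula (Fin n)) y
      ↔ φ.Realize (fun i => FreeGroup.lift y (w i)) := by
  have h1 := BoundedFormula.realize_subst (φ := φ)
    (tf := fun i => wordT Term.var (w i)) (v := y) (xs := (default : Fin 0 → H))
  have h2 : (fun i => (wordT (Term.var : Fin n → groupLang.Term (Fin n)) (w i)).realize y)
      = fun i => FreeGroup.lift y (w i) := by
    funext i
    rw [realize_wordT]
    rfl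
  rw [h2] at h1
  exact h1

/-- The sentence `∀ x, Θ(x) → φ'(x)`. -/
noncomputable def S (rels ws : Finset (FreeGroup (Fin n))) (φ' : groupLang.Formula (Fin n)) :
    groupLang.Sentence :=
  ((Θ Empty rels ws).imp (BoundedFormula.relabel (Sum.inr : Fin n → Empty ⊕ Fin n) φ')).alls

lemma realize_S (rels ws : Finset (FreeGroup (Fin n))) (φ' : groupLang.Formula (Fin n)) :
    H ⊨ S rels ws φ' ↔
      ∀ xs : Fin n → H,
        ((∀ r ∈ rels, FreeGroup.lift xs r = 1) ∧ ∀ w ∈ ws, FreeGroup.lift xs w ≠ 1) →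
          φ'.Realize xs := by
  rw [S, Sentence.Realize, realize_alls]
  refine forall_congr' fun xs => ?_
  rw [realize_imp, realize_Θ rels ws, realize_relabel_inr]
  have : xs ∘ Fin.castAdd 0 = xs := funext fun i => congrArg xs (Fin.ext rfl)
  rw [this]

/-- A multiplicative equivalence of groups induces an equivalence of
`groupLang`-structures. -/
def langEquivOfMulEquiv {G H : Type*} [Group G] [Group H] (σ : G ≃* H) :
    G ≃[groupLang] H where
  toEquiv := σ.toEquiv
  map_fun' := by
    intro k f x
    cases f
    · exact map_mul σ _ _
    · exact map_inv σ _
    · exact map_one σ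
  map_rel' := by
    intro k r x
    exact r.elim

lemma hom_of_witness {rels : Finset (FreeGroup (Fin n))} {G : Type*} [Group G]
    (e : PresentedGroup (rels : Set (FreeGroup (Fin n))) ≃* G) {H : Type*} [Group H]
    (x : Fin n → H) (hx : ∀ r ∈ rels, FreeGroup.lift x r = 1) :
    ∃ ψ : G →* H, ∀ w, ψ (e (PresentedGroup.mk _ w)) = FreeGroup.lift x w := by
  have hx' : ∀ r ∈ (rels : Set (FreeGroup (Fin n))), FreeGroup.lift x r = 1 := fun r hr =>
    hx r (by exact_mod_cast hr)
  refine ⟨(PresentedGroup.toGroup hx').comp e.symm.toMonoidHom, fun w => ?_⟩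
  have key : (PresentedGroup.toGroup hx').comp (PresentedGroup.mk _) = FreeGroup.lift x :=
    FreeGroup.ext_hom _ _ fun i => by
      simp only [MonoidHom.comp_apply, FreeGroup.lift_apply_of]
      exact PresentedGroup.toGroup.of hx' (x := i)
  calc (PresentedGroup.toGroup hx').comp e.symm.toMonoidHom (e (PresentedGroup.mk _ w))
      = (PresentedGroup.toGroup hx') (e.symm (e (PresentedGroup.mk _ w))) := rfl
    _ = (PresentedGroup.toGroup hx') (PresentedGroup.mk _ w) := by rw [MulEquiv.symm_apply_apply]
    _ = FreeGroup.lift x w := by rw [← MonoidHom.comp_apply, key]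

end SCH

/-- A finitely presented strongly co-Hopfian group is prime and ∃-homogeneous. -/
theorem stronglyCoHopfian_prime_and_existHomogeneous
    (G : Type*) [Group G] (hfp : GroupFinitelyPresented G)
    (hsch : StronglyCoHopfian G) :
    (∀ (G' : Type*) [Group G'], (G ≅[groupLang] G') → Nonempty (G ↪ₑ[groupLang] G')) ∧
      (∀ (n : ℕ) (u v : Fin n → G),
        (∀ φ : groupLang.Formula (Fin n), IsExistentialQF φ →
          (φ.Realize u ↔ φ.Realize v)) →
        ∃ σ : G ≃* G, ∀ i, σ (u i) = v i) := by
  classical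
  obtain ⟨n, rels, ⟨e⟩⟩ := hfp
  obtain ⟨F, h1F, hF⟩ := hsch
  set π : FreeGroup (Fin n) →* G := e.toMonoidHom.comp (PresentedGroup.mk _) with hπdef
  have hsurj : Function.Surjective π := e.surjective.comp (PresentedGroup.mk_surjective _)
  have hrel : ∀ r ∈ rels, π r = 1 := by
    intro r hr
    have h1 : PresentedGroup.mk (rels : Set (FreeGroup (Fin n))) r = 1 :=
      (QuotientGroup.eq_one_iff r).2 (Subgroup.subset_normalClosure hr)
    rw [hπdef, MonoidHom.comp_apply, h1, map_one]
  have hsurj2 := hsurj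
  choose sec hsec using hsurj
  set g : Fin n → G := fun i => π (FreeGroup.of i) with hg
  have hliftg : ∀ w, FreeGroup.lift g w = π w := by
    have h : FreeGroup.lift g = π := FreeGroup.ext_hom _ _ fun i => by
      rw [FreeGroup.lift_apply_of, hg]
    intro w; rw [h]
  set ws : Finset (FreeGroup (Fin n)) := F.image sec with hws
  -- conditions hold for the generators
  have C1g : ∀ r ∈ rels, FreeGroup.lift g r = 1 := fun r hr => by
    rw [hliftg]; exact hrel r hr
  have C2g : ∀ w ∈ ws, FreeGroup.lift g w ≠ 1 := by
    intro w hw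
    rw [hws] at hw
    rcases Finset.mem_image.1 hw with ⟨f, hf, rfl⟩
    rw [hliftg, hsec]
    exact fun h => h1F (h ▸ hf)
  -- homomorphisms from witnesses, with values on `π`
  have hwitG : ∀ (xs : Fin n → G), (∀ r ∈ rels, FreeGroup.lift xs r = 1) →
      ∃ ψ : G →* G, ∀ w, ψ (π w) = FreeGroup.lift xs w := by
    intro xs h1
    obtain ⟨ψ, hψ⟩ := SCH.hom_of_witness e xs h1
    exact ⟨ψ, fun w => by rw [hπdef, MonoidHom.comp_apply]; exact hψ w⟩
  -- an endomorphism coming from a witness tuple is bijective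
  have hbijW : ∀ (xs : Fin n → G) (ψ : G →* G),
      (∀ w, ψ (π w) = FreeGroup.lift xs w) →
      (∀ w ∈ ws, FreeGroup.lift xs w ≠ 1) → Function.Bijective ψ := by
    intro xs ψ hψ h2
    refine hF ψ (fun f hf => ?_)
    rw [← hsec f, hψ]
    exact h2 _ (by rw [hws]; exact Finset.mem_image_of_mem sec hf)
  -- Part 2 : ∃-homogeneity
  have part2 : ∀ (m : ℕ) (u v : Fin m → G),
      (∀ φ : groupLang.Formula (Fin m), IsExistentialQF φ →
        (φ.Realize u ↔ φ.Realize v)) →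
      ∃ σ : G ≃* G, ∀ i, σ (u i) = v i := by
    intro m u v huv
    set Φcore : groupLang.BoundedFormula (Fin m) n :=
      SCH.Θ (Fin m) rels ws ⊓ SCH.fInf Finset.univ
        (fun i : Fin m =>
          FirstOrder.Language.Term.bdEqual (FirstOrder.Language.Term.var (Sum.inl i))
            (SCH.wordT SCH.bv (sec (u i)))) with hΦ
    have hcore : ∀ (vv : Fin m → G) (xs : Fin n → G),
        Φcore.Realize vv xs ↔
          (((∀ r ∈ rels, FreeGroup.lift xs r = 1) ∧ ∀ w ∈ ws, FreeGroup.lift xs w ≠ 1) ∧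
            ∀ i, vv i = FreeGroup.lift xs (sec (u i))) := by
      intro vv xs
      rw [hΦ]
      simp [SCH.realize_Θ]
    have hQF : Φcore.IsQF := by
      rw [hΦ]
      exact (SCH.isQF_Θ _ _).inf (SCH.isQF_iInf _ _ fun i =>
        (FirstOrder.Language.BoundedFormula.IsAtomic.equal _ _).isQF)
    have hu : Φcore.exs.Realize u := by
      rw [FirstOrder.Language.BoundedFormula.realize_exs]
      exact ⟨g, (hcore u g).2 ⟨⟨C1g, C2g⟩, fun i => by rw [hliftg, hsec]⟩⟩
    have hv := (huv _ (SCH.isExistentialQF_exs (IsExistentialQF.of_isQF hQF))).1 hu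
    rw [FirstOrder.Language.BoundedFormula.realize_exs] at hv
    obtain ⟨xs, hxs⟩ := hv
    obtain ⟨⟨hx1, hx2⟩, hx3⟩ := (hcore v xs).1 hxs
    obtain ⟨ψ, hψ⟩ := hwitG xs hx1
    have hbij := hbijW xs ψ hψ hx2
    refine ⟨MulEquiv.ofBijective ψ hbij, fun i => ?_⟩
    show ψ (u i) = v i
    rw [← hsec (u i), hψ]
    exact (hx3 i).symm
  refine ⟨?_, part2⟩
  -- Part 1 : primality
  intro G' _ hGG'
  have hS0G : G ⊨ (SCH.Θ Empty rels ws).exs :=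
    (SCH.realize_Θ_exs rels ws).2 ⟨g, C1g, C2g⟩
  have hS0G' := (hGG'.realize_sentence _).1 hS0G
  obtain ⟨x', hx1', hx2'⟩ := (SCH.realize_Θ_exs rels ws).1 hS0G'
  obtain ⟨ψ, hψraw⟩ := SCH.hom_of_witness e x' hx1'
  have hψ : ∀ w, ψ (π w) = FreeGroup.lift x' w := fun w => by
    rw [hπdef, MonoidHom.comp_apply]; exact hψraw w
  -- step 1 : all witness tuples in G have the same type as g
  have step1 : ∀ xs : Fin n → G,
      (∀ r ∈ rels, FreeGroup.lift xs r = 1) → (∀ w ∈ ws, FreeGroup.lift xs w ≠ 1) →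
      ∀ φ' : groupLang.Formula (Fin n), (φ'.Realize xs ↔ φ'.Realize g) := by
    intro xs h1 h2 φ'
    obtain ⟨ψ₀, hψ₀⟩ := hwitG xs h1
    have hbij := hbijW xs ψ₀ hψ₀ h2
    have hcomp : (⇑(SCH.langEquivOfMulEquiv (MulEquiv.ofBijective ψ₀ hbij))) ∘ g = xs := by
      funext i
      show ψ₀ (g i) = xs i
      rw [hg]
      exact (hψ₀ (FreeGroup.of i)).trans (FreeGroup.lift_apply_of)
    rw [← hcomp]
    exact FirstOrder.Language.StrongHomClass.realize_formula _ φ'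
  -- step 3 : the tuple x' in G' has the same type as g in G
  have step3 : ∀ φ' : groupLang.Formula (Fin n), (φ'.Realize g ↔ φ'.Realize x') := by
    intro φ'
    constructor
    · intro hgr
      have hSG : G ⊨ SCH.S rels ws φ' := (SCH.realize_S rels ws φ').2
        (fun xs hxs => (step1 xs hxs.1 hxs.2 φ').2 hgr)
      exact ((SCH.realize_S rels ws φ').1 ((hGG'.realize_sentence _).1 hSG)) x' ⟨hx1', hx2'⟩
    · intro hx'
      by_contra hng
      have hSG : G ⊨ SCH.S rels ws φ'.not := (SCH.realize_S rels ws φ'.not).2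
        (fun xs hxs => FirstOrder.Language.Formula.realize_not.2
          (fun h => hng ((step1 xs hxs.1 hxs.2 φ').1 h)))
      exact FirstOrder.Language.Formula.realize_not.1
        (((SCH.realize_S rels ws φ'.not).1 ((hGG'.realize_sentence _).1 hSG)) x' ⟨hx1', hx2'⟩) hx'
  -- ψ is an elementary embedding
  refine ⟨⟨(ψ : G → G'), fun k φ x => ?_⟩⟩
  choose w hw using fun i => hsurj2 (x i)
  have e1 : FirstOrder.Language.Formula.Realize
        (FirstOrder.Language.BoundedFormula.subst φ
          (fun i => SCH.wordT FirstOrder.Language.Term.var (w i)) :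
          groupLang.Formula (Fin n)) g ↔ φ.Realize x := by
    rw [SCH.realize_subst_word,
      show (fun i => FreeGroup.lift g (w i)) = x from
        funext fun i => (hliftg _).trans (hw i)]
  have e2 : FirstOrder.Language.Formula.Realize
        (FirstOrder.Language.BoundedFormula.subst φ
          (fun i => SCH.wordT FirstOrder.Language.Term.var (w i)) :
          groupLang.Formula (Fin n)) x' ↔ φ.Realize (⇑ψ ∘ x) := by
    rw [SCH.realize_subst_word,
      show (fun i => FreeGroup.lift x' (w i)) = ⇑ψ ∘ x from
        funext fun i => (hψ (w i)).symm.trans (congrArg ψ (hw i))]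
  exact e2.symm.trans ((step3 _).symm.trans e1)
end
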